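/- Let c ∈ [0,1) and s = √(1−c²). Then f(0) = s⁸/16 > 0 and f(−(1−c)²) < 0; consequently f has a zero in the open interval (−(1−c)², 0). Here f(x) = (1/16)·( ((σ_3/64)x² + (c/4)x − s²)² − (1/16)(1 − σ_2 + 2σ_3)c²x² + (1/16)(2 − σ_1)x² − c(x − 8c) )² − (64 + u_1²u_2²u_3²x²)·( x/32 − c/8 − c³/8 + (σ_3/512)c x² )², where u_1 = √(2(2+√2)) − 1 − √2, u_2 = √(2+√2) − 1, u_3 = 1 + √2 − √(2+√2), σ_1 = (1−u_1²)+(1−u_2²)+(1−u_3²), σ_2 = (1−u_1²)(1−u_2²)+(1−u_1²)(1−u_3²)+(1−u_2²)(1−u_3²), σ_3 = (1−u_1²)(1−u_2²)(1−u_3²). -/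
import Mathlib

open Real

noncomputable def u1 : ℝ := Real.sqrt (2 * (2 + Real.sqrt 2)) - 1 - Real.sqrt 2

noncomputable def u2 : ℝ := Real.sqrt (2 + Real.sqrt 2) - 1

noncomputable def u3 : ℝ := 1 + Real.sqrt 2 - Real.sqrt (2 + Real.sqrt 2)

noncomputable def σ1 : ℝ := (1 - u1 ^ 2) + (1 - u2 ^ 2) + (1 - u3 ^ 2)

noncomputable def σ2 : ℝ :=
  (1 - u1 ^ 2) * (1 - u2 ^ 2) + (1 - u1 ^ 2) * (1 - u3 ^ 2) + (1 - u2 ^ 2) * (1 - u3 ^ 2)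

noncomputable def σ3 : ℝ := (1 - u1 ^ 2) * (1 - u2 ^ 2) * (1 - u3 ^ 2)

/-- The resolvent function `f` of the quartic G⁰ interpolation problem
(equation (6) of the paper). -/
noncomputable def quarticF (c s x : ℝ) : ℝ :=
  (1 / 16) * (((σ3 / 64) * x ^ 2 + (c / 4) * x - s ^ 2) ^ 2
      - (1 / 16) * (1 - σ2 + 2 * σ3) * c ^ 2 * x ^ 2
      + (1 / 16) * (2 - σ1) * x ^ 2 - c * (x - 8 * c)) ^ 2
    - (64 + u1 ^ 2 * u2 ^ 2 * u3 ^ 2 * x ^ 2)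
      * (x / 32 - c / 8 - c ^ 3 / 8 + (σ3 / 512) * c * x ^ 2) ^ 2

set_option maxHeartbeats 4000000

/-- Lemma 2 of the paper: `f(0) = s⁸/16 > 0`, `f(−(1−c)²) < 0`, hence `f` has a zero in
`(−(1−c)², 0)`. -/
theorem stmt_13 (c : ℝ) (hc : c ∈ Set.Ico (0 : ℝ) 1) (s : ℝ)
    (hs : s = Real.sqrt (1 - c ^ 2)) :
    quarticF c s 0 = s ^ 8 / 16 ∧ 0 < quarticF c s 0 ∧
      quarticF c s (-(1 - c) ^ 2) < 0 ∧
      ∃ x ∈ Set.Ioo (-(1 - c) ^ 2) (0 : ℝ), quarticF c s x = 0 := by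
  obtain ⟨hc0, hc1⟩ := hc
  have h1c2 : (0:ℝ) < 1 - c ^ 2 := by nlinarith
  have hs2 : s ^ 2 = 1 - c ^ 2 := by rw [hs]; exact Real.sq_sqrt h1c2.le
  have hspos : 0 < s := by rw [hs]; exact Real.sqrt_pos.mpr h1c2
  have e0 : quarticF c s 0 = s ^ 8 / 16 := by
    unfold quarticF
    linear_combination (c^2 + c^2*s^2 - c^4) * hs2
  have p0 : 0 < quarticF c s 0 := by rw [e0]; positivity
  set r := Real.sqrt 2 with hrdef
  set b := Real.sqrt (2 + Real.sqrt 2) with hbdef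
  have hr2 : r ^ 2 = 2 := by rw [hrdef]; exact Real.sq_sqrt (by norm_num)
  have hrpos : 0 < r := by rw [hrdef]; exact Real.sqrt_pos.mpr (by norm_num)
  have hb2 : b ^ 2 = 2 + r := by
    rw [hbdef, hrdef]; exact Real.sq_sqrt (by positivity)
  have hbpos : 0 < b := by rw [hbdef]; exact Real.sqrt_pos.mpr (by positivity)
  have hr_lo : (1.41421356237 : ℝ) < r := by nlinarith
  have hr_hi : r < 1.41421356238 := by nlinarith
  have hb_lo : (1.84775906502 : ℝ) < b := by nlinarith
  have hb_hi : b < 1.84775906503 := by nlinarith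
  have hrb_lo : (2.6131259297 : ℝ) < r * b := by nlinarith
  have hrb_hi : r * b < 2.6131259298 := by nlinarith
  have hd : Real.sqrt (2 * (2 + Real.sqrt 2)) = r * b := by
    rw [hrdef, hbdef]
    exact Real.sqrt_mul (by norm_num : (0:ℝ) ≤ 2) _
  have hσ1 : σ1 = -12 - 8*r + 8*b + 4*(r*b) := by
    unfold σ1 u1 u2 u3
    rw [hd, ← hbdef, ← hrdef]
    linear_combination ((-2) + (-1)*r^2) * hb2 + ((-4) + (-1)*r + (2)*b) * hr2
  have hσ2 : σ2 = 178 + 126*r - 96*b - 68*(r*b) := by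
    unfold σ2 u1 u2 u3
    rw [hd, ← hbdef, ← hrdef]
    linear_combination ((6) + (19)*r + (19)*r^2 + (8)*r^3 + (1)*r^4 + (-4)*b + (-6)*b*r + (-8)*b*r^2 + (-2)*b*r^3 + (1)*b^2 + (2)*b^2*r^2) * hb2 + ((83) + (41)*r + (11)*r^2 + (1)*r^3 + (-44)*b + (-20)*b*r + (-4)*b*r^2) * hr2
  have hσ3 : σ3 = -740 - 524*r + 400*b + 284*(r*b) := by
    unfold σ3 u1 u2 u3
    rw [hd, ← hbdef, ← hrdef]
    linear_combination ((-28)*r + (-72)*r^2 + (-61)*r^3 + (-18)*r^4 + (-1)*r^5 + (20)*b*r + (42)*b*r^2 + (30)*b*r^3 + (6)*b*r^4 + (-10)*b^2*r + (-19)*b^2*r^2 + (-11)*b^2*r^3 + (-1)*b^2*r^4 + (2)*b^3*r + (6)*b^3*r^2 + (2)*b^3*r^3 + (-1)*b^4*r^2) * hb2 + ((-370) + (-234)*r + (-99)*r^2 + (-20)*r^3 + (-1)*r^4 + (200)*b + (122)*b*r + (44)*b*r^2 + (6)*b*r^3) * hr2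
  have hP : u1 ^ 2 * u2 ^ 2 * u3 ^ 2 = 931 + 658*r - 504*b - 356*(r*b) := by
    unfold u1 u2 u3
    rw [hd, ← hbdef, ← hrdef]
    linear_combination ((8) + (47)*r + (92)*r^2 + (69)*r^3 + (19)*r^4 + (1)*r^5 + (-4)*b + (-26)*b*r + (-50)*b*r^2 + (-32)*b*r^3 + (-6)*b*r^4 + (1)*b^2 + (10)*b^2*r + (21)*b^2*r^2 + (11)*b^2*r^3 + (1)*b^2*r^4 + (-2)*b^3*r + (-6)*b^3*r^2 + (-2)*b^3*r^3 + (1)*b^4*r^2) * hb2 + ((457) + (276)*r + (110)*r^2 + (21)*r^3 + (1)*r^4 + (-246)*b + (-142)*b*r + (-48)*b*r^2 + (-6)*b*r^3) * hr2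
  have hkey : quarticF c s (-(1 - c) ^ 2) =
      (1-c)^4 * (((82140511969/1048576) + (7260262457/131072)*r + (-5556765817/131072)*b + (-7858451149/262144)*(r*b)) * ((1-c)^12) +
        ((1882230431/65536) + (1330929641/65536)*r + (-254664883/16384)*b + (-720292843/65536)*(r*b)) * (c^1 * (1-c)^11) +
        ((2296992983/65536) + (1624185961/65536)*r + (-310790455/16384)*b + (-878995751/65536)*(r*b)) * (c^2 * (1-c)^10) +
        ((28507419/2048) + (10077999/1024)*r + (-15434461/2048)*b + (-43629575/8192)*(r*b)) * (c^3 * (1-c)^9) +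
        ((28515925/8192) + (40338219/16384)*r + (-3879521/2048)*b + (-5452391/4096)*(r*b)) * (c^4 * (1-c)^8) +
        ((6242345/2048) + (1107165/512)*r + (-1713705/1024)*b + (-2391533/2048)*(r*b)) * (c^5 * (1-c)^7) +
        ((586737/1024) + (27141/64)*r + (-357745/1024)*b + (-462657/2048)*(r*b)) * (c^6 * (1-c)^6) +
        ((369/4) + (1517/16)*r + (-12341/128)*b + (-763/16)*(r*b)) * (c^7 * (1-c)^5) +
        ((44207/1024) + (31335/512)*r + (-8055/128)*b + (-7827/256)*(r*b)) * (c^8 * (1-c)^4) +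
        ((-321/16) + (231/32)*r + (-51/4)*b + (-87/32)*(r*b)) * (c^9 * (1-c)^3) +
        ((-583/64) + (209/64)*r + (-71/16)*b + (-23/16)*(r*b)) * (c^10 * (1-c)^2) +
        ((-9/4) + (1)*r + (-1)*b + (-1/2)*(r*b)) * (c^11 * (1-c)^1) +
        ((-7/16) + (0)*r + (0)*b + (0)*(r*b)) * (c^12)) := by
    unfold quarticF
    rw [hσ1, hσ2, hσ3, hP, hs2]
    linear_combination ((82463987/32768) + (456123921/65536)*r + (3822508899/524288)*r^2 + (911848101/262144)*r^3 + (89129921/131072)*r^4 + (25411681/1048576)*r^5 + (-3150625/4096)*b + (-35022425/16384)*b*r + (-145944831/65536)*b*r^2 + (-270212723/262144)*b*r^3 + (-46886341/262144)*b*r^4 + (390625/4096)*b^2 + (1109375/4096)*b^2*r + (9451875/32768)*b^2*r^2 + (8947775/65536)*b^2*r^3 + (25411681/1048576)*b^2*r^4 + (-158356987/4096)*c + (-885018331/8192)*c*r + (-7494624867/65536)*c*r^2 + (-3612795595/65536)*c*r^3 + (-89129921/8192)*c*r^4 + (-25411681/65536)*c*r^5 + (12326875/1024)*c*b + (137749775/4096)*c*b*r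 + (577157793/16384)*c*b*r^2 + (1074605093/65536)*c*b*r^3 + (46886341/16384)*c*b*r^4 + (-390625/256)*c*b^2 + (-1109375/256)*c*b^2*r + (-9451875/2048)*c*b^2*r^2 + (-8947775/4096)*c*b^2*r^3 + (-25411681/65536)*c*b^2*r^4 + (1146603603/4096)*c^2 + (6466290949/8192)*c^2*r + (55256799043/65536)*c^2*r^2 + (1679700747/4096)*c^2*r^3 + (1336948815/16384)*c^2*r^4 + (381175215/131072)*c^2*r^5 + (-22673125/256)*c^2*b + (-254547725/1024)*c^2*b*r + (-1071607757/4096)*c^2*b*r^2 + (-2004921643/16384)*c^2*b*r^3 + (-703295115/32768)*c^2*b*r^4 + (5859375/512)*c^2*b^2 + (16640625/512)*c^2*b^2*r + (141778125/4096)*c^2*b^2*r^2 + (134216625/8192)*c^2*b^2*r^3 + (381175215/131072)*c^2*b^2*r^4 + (-5193813497/4096)*c^3 + (-29517547129/8192)*c^3*r + (-254183148849/65536)*c^3*r^2 + (-124559915497/65536)*c^3*r^3 + (-3119547235/8192)*c^3*r^4 + (-889408835/65536)*c^3*r^5 + (416395625/1024)*c^3*b + (4693531525/4096)*c^3*b*r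 + (19839167403/16384)*c^3*b*r^2 + (37270366327/65536)*c^3*b*r^3 + (1641021935/16384)*c^3*b*r^4 + (-13671875/256)*c^3*b^2 + (-38828125/256)*c^3*b^2*r + (-330815625/2048)*c^3*b^2*r^2 + (-313172125/4096)*c^3*b^2*r^3 + (-889408835/65536)*c^3*b^2*r^4 + (32943414333/8192)*c^4 + (188426077767/16384)*c^4*r + (1632886628477/131072)*c^4*r^2 + (402561693923/65536)*c^4*r^3 + (40554114055/32768)*c^4*r^4 + (11562314855/262144)*c^4*r^5 + (-1335286875/1024)*c^4*b + (-15101207575/4096)*c^4*b*r + (-64045077069/16384)*c^4*b*r^2 + (-120721086645/65536)*c^4*b*r^3 + (-21333285155/65536)*c^4*b*r^4 + (177734375/1024)*c^4*b^2 + (504765625/1024)*c^4*b^2*r + (4300603125/8192)*c^4*b^2*r^2 + (4071237625/16384)*c^4*b^2*r^3 + (11562314855/262144)*c^4*b^2*r^4 + (-38773991203/4096)*c^5 + (-222909157731/8192)*c^5*r + (-1941430035979/65536)*c^5*r^2 + (-961916207955/65536)*c^5*r^3 + (-24332468433/8192)*c^5*r^4 + (-6937388913/65536)*c^5*r^5 +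 (3170951875/1024)*c^5*b + (35956564775/4096)*c^5*b*r + (152898129593/16384)*c^5*b*r^2 + (288966720013/65536)*c^5*b*r^3 + (12799971093/16384)*c^5*b*r^4 + (-106640625/256)*c^5*b^2 + (-302859375/256)*c^5*b^2*r + (-2580361875/2048)*c^5*b^2*r^2 + (-2442742575/4096)*c^5*b^2*r^3 + (-6937388913/65536)*c^5*b^2*r^4 + (70061348085/4096)*c^6 + (404331595627/8192)*c^6*r + (3534823831925/65536)*c^6*r^2 + (219720053795/8192)*c^6*r^3 + (89219050921/16384)*c^6*r^4 + (25437092681/131072)*c^6*r^5 + (-1441886875/256)*c^6*b + (-16382779325/1024)*c^6*b*r + (-69803014479/4096)*c^6*b*r^2 + (-132183483839/16384)*c^6*b*r^3 + (-46933227341/32768)*c^6*b*r^4 + (391015625/512)*c^6*b^2 + (1110484375/512)*c^6*b^2*r + (9461326875/4096)*c^6*b^2*r^2 + (8956722775/8192)*c^6*b^2*r^3 + (25437092681/131072)*c^6*b^2*r^4 + (-99090096649/4096)*c^7 + (-573389622121/8192)*c^7*r + (-5025866154881/65536)*c^7*r^2 + (-2505463892569/65536)*c^7*r^3 + (-63727893515/8192)*c^7*r^4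 + (-18169351915/65536)*c^7*r^5 + (8194525625/1024)*c^7*b + (93235429925/4096)*c^7*b*r + (397798094331/16384)*c^7*b*r^2 + (754319305399/65536)*c^7*b*r^3 + (33523733815/16384)*c^7*b*r^4 + (-279296875/256)*c^7*b^2 + (-793203125/256)*c^7*b^2*r + (-6758090625/2048)*c^7*b^2*r^2 + (-6397659125/4096)*c^7*b^2*r^3 + (-18169351915/65536)*c^7*b^2*r^4 + (443257363993/16384)*c^8 + (2569026565443/32768)*c^8*r + (22552933196553/262144)*c^8*r^2 + (5629819258503/131072)*c^8*r^3 + (573551041635/65536)*c^8*r^4 + (163524167235/524288)*c^8*r^5 + (-18378091875/2048)*c^8*b + (-209273957475/8192)*c^8*b*r + (-893614902477/32768)*c^8*b*r^2 + (-1695869189553/131072)*c^8*b*r^3 + (-301713604335/131072)*c^8*b*r^4 + (2513671875/2048)*c^8*b^2 + (7138828125/2048)*c^8*b^2*r + (60822815625/16384)*c^8*b^2*r^2 + (57578932125/32768)*c^8*b^2*r^3 + (163524167235/524288)*c^8*b^2*r^4 + (-98263892409/4096)*c^9 + (-569886864921/8192)*c^9*r + (-5006065249329/65536)*c^9*r^2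 + (-2500799848041/65536)*c^9*r^3 + (-63727893515/8192)*c^9*r^4 + (-18169351915/65536)*c^9*r^5 + (8157345625/1024)*c^9*b + (92919857525/4096)*c^9*b*r + (396905280123/16384)*c^9*b*r^2 + (753477337415/65536)*c^9*b*r^3 + (33523733815/16384)*c^9*b*r^4 + (-279296875/256)*c^9*b^2 + (-793203125/256)*c^9*b^2*r + (-6758090625/2048)*c^9*b^2*r^2 + (-6397659125/4096)*c^9*b^2*r^3 + (-18169351915/65536)*c^9*b^2*r^4 + (68820843509/4096)*c^10 + (399074071459/8192)*c^10*r + (3505112891301/65536)*c^10*r^2 + (109422772723/4096)*c^10*r^3 + (89219050921/16384)*c^10*r^4 + (25437092681/131072)*c^10*r^5 + (-1427944375/256)*c^10*b + (-16264439675/1024)*c^10*b*r + (-69468209151/4096)*c^10*b*r^2 + (-131867745845/16384)*c^10*b*r^3 + (-46933227341/32768)*c^10*b*r^4 + (391015625/512)*c^10*b^2 + (1110484375/512)*c^10*b^2*r + (9461326875/4096)*c^10*b^2*r^2 + (8956722775/8192)*c^10*b^2*r^3 + (25437092681/131072)*c^10*b^2*r^4 + (-37643843603/4096)*c^11 + (-218122754131/8192)*c^11*r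 + (-1914400747003/65536)*c^11*r^2 + (-955556147235/65536)*c^11*r^3 + (-24332468433/8192)*c^11*r^4 + (-6937388913/65536)*c^11*r^5 + (3120251875/1024)*c^11*b + (35526238775/4096)*c^11*b*r + (151680655673/16384)*c^11*b*r^2 + (287818581853/65536)*c^11*b*r^3 + (12799971093/16384)*c^11*b*r^4 + (-106640625/256)*c^11*b^2 + (-302859375/256)*c^11*b^2*r + (-2580361875/2048)*c^11*b^2*r^2 + (-2442742575/4096)*c^11*b^2*r^3 + (-6937388913/65536)*c^11*b^2*r^4 + (31506466557/8192)*c^12 + (182347944599/16384)*c^12*r + (1598606084061/131072)*c^12*r^2 + (398533655467/65536)*c^12*r^3 + (40554114055/32768)*c^12*r^4 + (11562314855/262144)*c^12*r^5 + (-1303176875/1024)*c^12*b + (-14828667775/4096)*c^12*b*r + (-63274010253/16384)*c^12*b*r^2 + (-119993932477/65536)*c^12*b*r^3 + (-21333285155/65536)*c^12*b*r^4 + (177734375/1024)*c^12*b^2 + (504765625/1024)*c^12*b^2*r + (4300603125/8192)*c^12*b^2*r^2 + (4071237625/16384)*c^12*b^2*r^3 + (11562314855/262144)*c^12*b^2*r^4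 + (-4872010025/4096)*c^13 + (-28158927273/8192)*c^13*r + (-246535155553/65536)*c^13*r^2 + (-122766052217/65536)*c^13*r^3 + (-3119547235/8192)*c^13*r^4 + (-889408835/65536)*c^13*r^5 + (402095625/1024)*c^13*b + (4572157525/4096)*c^13*b*r + (19495777323/16384)*c^13*b*r^2 + (36946532487/65536)*c^13*b*r^3 + (1641021935/16384)*c^13*b*r^4 + (-13671875/256)*c^13*b^2 + (-38828125/256)*c^13*b^2*r + (-330815625/2048)*c^13*b^2*r^2 + (-313172125/4096)*c^13*b^2*r^3 + (-889408835/65536)*c^13*b^2*r^4 + (1049313875/4096)*c^14 + (6056590365/8192)*c^14*r + (52956428083/65536)*c^14*r^2 + (3292131621/8192)*c^14*r^3 + (1336948815/16384)*c^14*r^4 + (381175215/131072)*c^14*r^5 + (-21600625/256)*c^14*b + (-245444675/1024)*c^14*b*r + (-1045853501/4096)*c^14*b*r^2 + (-1980634105/16384)*c^14*b*r^3 + (-703295115/32768)*c^14*b*r^4 + (5859375/512)*c^14*b^2 + (16640625/512)*c^14*b^2*r + (141778125/4096)*c^14*b^2*r^2 + (134216625/8192)*c^14*b^2*r^3 + (381175215/131072)*c^14*b^2*r^4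 + (-140496875/4096)*c^15 + (-810044875/8192)*c^15*r + (-7075014995/65536)*c^15*r^2 + (-3514948507/65536)*c^15*r^3 + (-89129921/8192)*c^15*r^4 + (-25411681/65536)*c^15*r^5 + (11546875/1024)*c^15*b + (131129375/4096)*c^15*b*r + (558427425/16384)*c^15*b*r^2 + (1056941429/65536)*c^15*b*r^3 + (46886341/16384)*c^15*b*r^4 + (-390625/256)*c^15*b^2 + (-1109375/256)*c^15*b^2*r + (-9451875/2048)*c^15*b^2*r^2 + (-8947775/4096)*c^15*b^2*r^3 + (-25411681/65536)*c^15*b^2*r^4 + (70421875/32768)*c^16 + (405760625/65536)*c^16*r + (3541696675/524288)*c^16*r^2 + (879232405/262144)*c^16*r^3 + (89129921/131072)*c^16*r^4 + (25411681/1048576)*c^16*r^5 + (-2890625/4096)*c^16*b + (-32815625/16384)*c^16*b*r + (-139701375/65536)*c^16*b*r^2 + (-264324835/262144)*c^16*b*r^3 + (-46886341/262144)*c^16*b*r^4 + (390625/4096)*c^16*b^2 + (1109375/4096)*c^16*b^2*r + (9451875/32768)*c^16*b^2*r^2 + (8947775/65536)*c^16*b^2*r^3 + (25411681/1048576)*c^16*b^2*r^4)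 * hb2 + ((1175210079/32768) + (9139693223/524288)*r + (5418794423/1048576)*r^2 + (381931365/524288)*r^3 + (25411681/1048576)*r^4 + (-4945609079/262144)*b + (-2179240125/262144)*b*r + (-261799933/131072)*b*r^2 + (-46886341/262144)*b*r^3 + (-36839613085/65536)*c + (-9010242023/32768)*c*r + (-2692098807/32768)*c*r^2 + (-381931365/32768)*c*r^3 + (-25411681/65536)*c*r^4 + (4848759979/16384)*c*b + (8614103117/65536)*c*b*r + (2088153665/65536)*c*b*r^2 + (46886341/16384)*c*b*r^3 + (135729063007/32768)*c^2 + (133508347625/65536)*c^2*r + (80321454189/131072)*c^2*r^2 + (5728970475/65536)*c^2*r^3 + (381175215/131072)*c^2*r^4 + (-71507926057/32768)*c^2*b + (-3996840139/4096)*c^2*b*r + (-7810650431/32768)*c^2*b*r^2 + (-703295115/32768)*c^2*b*r^3 + (-1248172544383/65536)*c^3 + (-308333342653/32768)*c^3*r + (-93279493081/32768)*c^3*r^2 + (-13367597775/32768)*c^3*r^3 + (-889408835/65536)*c^3*r^4 + (164493919089/16384)*c^3*b + (295880497679/65536)*c^3*b*r + (72744566347/65536)*c^3*b*r^2 + (1641021935/16384)*c^3*b*r^3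 + (1001962216765/16384)*c^4 + (3974864402905/131072)*c^4*r + (2416234694337/262144)*c^4*r^2 + (173778771075/131072)*c^4*r^3 + (11562314855/262144)*c^4*r^4 + (-2113743017945/65536)*c^4*b + (-954897887147/65536)*c^4*b*r + (-118006118355/32768)*c^4*b*r^2 + (-21333285155/65536)*c^4*b*r^3 + (-9527999605381/65536)*c^5 + (-2369264692159/32768)*c^5*r + (-722754479571/32768)*c^5*r^2 + (-104267262645/32768)*c^5*r^3 + (-6937388913/65536)*c^5*r^4 + (1256734333627/16384)*c^5*b + (2279172258133/65536)*c^5*b*r + (565665480169/65536)*c^5*b*r^2 + (12799971093/16384)*c^5*b*r^3 + (8672465580065/32768)*c^6 + (8644795009863/65536)*c^6*r + (5288694281739/131072)*c^6*r^2 + (382313296365/65536)*c^6*r^3 + (25437092681/131072)*c^6*r^4 + (-4576821976599/32768)*c^6*b + (-520172235979/8192)*c^6*b*r + (-518007497821/32768)*c^6*b*r^2 + (-46933227341/32768)*c^6*b*r^3 + (-24658427380991/65536)*c^7 + (-6154094524765/32768)*c^7*r + (-1886008168077/32768)*c^7*r^2 + (-273080925975/32768)*c^7*r^3 + (-18169351915/65536)*c^7*r^4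 + (3253936291465/16384)*c^7*b + (5928108002223/65536)*c^7*b*r + (1479006534379/65536)*c^7*b*r^2 + (33523733815/16384)*c^7*b*r^3 + (6915251394607/16384)*c^8 + (55276496851269/262144)*c^8*r + (33918249026277/524288)*c^8*r^2 + (2457728333775/262144)*c^8*r^3 + (163524167235/524288)*c^8*r^4 + (-29204542876437/131072)*c^8*b + (-13316018983311/131072)*c^8*b*r + (-1663207727379/65536)*c^8*b*r^2 + (-301713604335/131072)*c^8*b*r^3 + (-24558929787503/65536)*c^9 + (-6136879682621/32768)*c^9*r + (-1883676145813/32768)*c^9*r^2 + (-273080925975/32768)*c^9*r^3 + (-18169351915/65536)*c^9*r^4 + (3241318419545/16384)*c^9*b + (5914240724799/65536)*c^9*b*r + (1478164566395/65536)*c^9*b*r^2 + (33523733815/16384)*c^9*b*r^3 + (8597802910705/32768)*c^10 + (8593140901135/65536)*c^10*r + (5274702148155/131072)*c^10*r^2 + (382313296365/65536)*c^10*r^3 + (25437092681/131072)*c^10*r^4 + (-4538950665647/32768)*c^10*b + (-258786060731/4096)*c^10*b*r + (-517376021833/32768)*c^10*b*r^2 + (-46933227341/32768)*c^10*b*r^3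 + (-9392089971253/65536)*c^11 + (-2345775880351/32768)*c^11*r + (-719574449211/32768)*c^11*r^2 + (-104267262645/32768)*c^11*r^3 + (-6937388913/65536)*c^11*r^4 + (1239502243019/16384)*c^11*b + (2260262334373/65536)*c^11*b*r + (564517342009/65536)*c^11*b*r^2 + (12799971093/16384)*c^11*b*r^3 + (980398458413/16384)*c^12 + (3915315967945/131072)*c^12*r + (2400122540513/262144)*c^12*r^2 + (173778771075/131072)*c^12*r^3 + (11562314855/262144)*c^12*r^4 + (-2070008166441/65536)*c^12*b + (-942921602099/65536)*c^12*b*r + (-117642541271/32768)*c^12*b*r^2 + (-21333285155/65536)*c^12*b*r^3 + (-1209638467695/65536)*c^13 + (-301696119325/32768)*c^13*r + (-92382561441/32768)*c^13*r^2 + (-13367597775/32768)*c^13*r^3 + (-889408835/65536)*c^13*r^4 + (159611105345/16384)*c^13*b + (290546929439/65536)*c^13*b*r + (72420732507/65536)*c^13*b*r^2 + (1641021935/16384)*c^13*b*r^3 + (129924331759/32768)*c^14 + (129520040657/65536)*c^14*r + (79245136221/131072)*c^14*r^2 + (5728970475/65536)*c^14*r^3 + (381175215/131072)*c^14*r^4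 + (-68567205665/32768)*c^14*b + (-7793671469/8192)*c^14*b*r + (-7762075355/32768)*c^14*b*r^2 + (-703295115/32768)*c^14*b*r^3 + (-34717577037/65536)*c^15 + (-8646988359/32768)*c^15*r + (-2643175263/32768)*c^15*r^2 + (-381931365/32768)*c^15*r^3 + (-25411681/65536)*c^15*r^4 + (4580164923/16384)*c^15*b + (8323181213/65536)*c^15*b*r + (2070490001/65536)*c^15*b*r^2 + (46886341/16384)*c^15*b*r^3 + (1086238479/32768)*c^16 + (8654282695/524288)*c^16*r + (5288331639/1048576)*c^16*r^2 + (381931365/524288)*c^16*r^3 + (25411681/1048576)*c^16*r^4 + (-4585500631/262144)*c^16*b + (-2082266157/262144)*c^16*b*r + (-258855989/131072)*c^16*b*r^2 + (-46886341/262144)*c^16*b*r^3) * hr2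
  have hB0 : ((82140511969/1048576) + (7260262457/131072)*r + (-5556765817/131072)*b + (-7858451149/262144)*(r*b)) < 0 := by linarith only [hr_lo, hr_hi, hb_lo, hb_hi, hrb_lo, hrb_hi]
  have hB1 : ((1882230431/65536) + (1330929641/65536)*r + (-254664883/16384)*b + (-720292843/65536)*(r*b)) < 0 := by linarith only [hr_lo, hr_hi, hb_lo, hb_hi, hrb_lo, hrb_hi]
  have hB2 : ((2296992983/65536) + (1624185961/65536)*r + (-310790455/16384)*b + (-878995751/65536)*(r*b)) < 0 := by linarith only [hr_lo, hr_hi, hb_lo, hb_hi, hrb_lo, hrb_hi]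
  have hB3 : ((28507419/2048) + (10077999/1024)*r + (-15434461/2048)*b + (-43629575/8192)*(r*b)) < 0 := by linarith only [hr_lo, hr_hi, hb_lo, hb_hi, hrb_lo, hrb_hi]
  have hB4 : ((28515925/8192) + (40338219/16384)*r + (-3879521/2048)*b + (-5452391/4096)*(r*b)) < 0 := by linarith only [hr_lo, hr_hi, hb_lo, hb_hi, hrb_lo, hrb_hi]
  have hB5 : ((6242345/2048) + (1107165/512)*r + (-1713705/1024)*b + (-2391533/2048)*(r*b)) < 0 := by linarith only [hr_lo, hr_hi, hb_lo, hb_hi, hrb_lo, hrb_hi]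
  have hB6 : ((586737/1024) + (27141/64)*r + (-357745/1024)*b + (-462657/2048)*(r*b)) < 0 := by linarith only [hr_lo, hr_hi, hb_lo, hb_hi, hrb_lo, hrb_hi]
  have hB7 : ((369/4) + (1517/16)*r + (-12341/128)*b + (-763/16)*(r*b)) < 0 := by linarith only [hr_lo, hr_hi, hb_lo, hb_hi, hrb_lo, hrb_hi]
  have hB8 : ((44207/1024) + (31335/512)*r + (-8055/128)*b + (-7827/256)*(r*b)) < 0 := by linarith only [hr_lo, hr_hi, hb_lo, hb_hi, hrb_lo, hrb_hi]
  have hB9 : ((-321/16) + (231/32)*r + (-51/4)*b + (-87/32)*(r*b)) < 0 := by linarith only [hr_lo, hr_hi, hb_lo, hb_hi, hrb_lo, hrb_hi]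
  have hB10 : ((-583/64) + (209/64)*r + (-71/16)*b + (-23/16)*(r*b)) < 0 := by linarith only [hr_lo, hr_hi, hb_lo, hb_hi, hrb_lo, hrb_hi]
  have hB11 : ((-9/4) + (1)*r + (-1)*b + (-1/2)*(r*b)) < 0 := by linarith only [hr_lo, hr_hi, hb_lo, hb_hi, hrb_lo, hrb_hi]
  have hB12 : ((-7/16) + (0)*r + (0)*b + (0)*(r*b)) < 0 := by linarith only [hr_lo, hr_hi, hb_lo, hb_hi, hrb_lo, hrb_hi]
  have t0 : ((82140511969/1048576) + (7260262457/131072)*r + (-5556765817/131072)*b + (-7858451149/262144)*(r*b)) * ((1-c)^12) < 0 := mul_neg_of_neg_of_pos hB0 (pow_pos (by linarith only [hc1]) 12)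
  have t1 : ((1882230431/65536) + (1330929641/65536)*r + (-254664883/16384)*b + (-720292843/65536)*(r*b)) * (c^1 * (1-c)^11) ≤ 0 := mul_nonpos_of_nonpos_of_nonneg hB1.le (mul_nonneg (pow_nonneg hc0 1) (pow_nonneg (by linarith only [hc1]) 11))
  have t2 : ((2296992983/65536) + (1624185961/65536)*r + (-310790455/16384)*b + (-878995751/65536)*(r*b)) * (c^2 * (1-c)^10) ≤ 0 := mul_nonpos_of_nonpos_of_nonneg hB2.le (mul_nonneg (pow_nonneg hc0 2) (pow_nonneg (by linarith only [hc1]) 10))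
  have t3 : ((28507419/2048) + (10077999/1024)*r + (-15434461/2048)*b + (-43629575/8192)*(r*b)) * (c^3 * (1-c)^9) ≤ 0 := mul_nonpos_of_nonpos_of_nonneg hB3.le (mul_nonneg (pow_nonneg hc0 3) (pow_nonneg (by linarith only [hc1]) 9))
  have t4 : ((28515925/8192) + (40338219/16384)*r + (-3879521/2048)*b + (-5452391/4096)*(r*b)) * (c^4 * (1-c)^8) ≤ 0 := mul_nonpos_of_nonpos_of_nonneg hB4.le (mul_nonneg (pow_nonneg hc0 4) (pow_nonneg (by linarith only [hc1]) 8))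
  have t5 : ((6242345/2048) + (1107165/512)*r + (-1713705/1024)*b + (-2391533/2048)*(r*b)) * (c^5 * (1-c)^7) ≤ 0 := mul_nonpos_of_nonpos_of_nonneg hB5.le (mul_nonneg (pow_nonneg hc0 5) (pow_nonneg (by linarith only [hc1]) 7))
  have t6 : ((586737/1024) + (27141/64)*r + (-357745/1024)*b + (-462657/2048)*(r*b)) * (c^6 * (1-c)^6) ≤ 0 := mul_nonpos_of_nonpos_of_nonneg hB6.le (mul_nonneg (pow_nonneg hc0 6) (pow_nonneg (by linarith only [hc1]) 6))
  have t7 : ((369/4) + (1517/16)*r + (-12341/128)*b + (-763/16)*(r*b)) * (c^7 * (1-c)^5) ≤ 0 := mul_nonpos_of_nonpos_of_nonneg hB7.le (mul_nonneg (pow_nonneg hc0 7) (pow_nonneg (by linarith only [hc1]) 5))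
  have t8 : ((44207/1024) + (31335/512)*r + (-8055/128)*b + (-7827/256)*(r*b)) * (c^8 * (1-c)^4) ≤ 0 := mul_nonpos_of_nonpos_of_nonneg hB8.le (mul_nonneg (pow_nonneg hc0 8) (pow_nonneg (by linarith only [hc1]) 4))
  have t9 : ((-321/16) + (231/32)*r + (-51/4)*b + (-87/32)*(r*b)) * (c^9 * (1-c)^3) ≤ 0 := mul_nonpos_of_nonpos_of_nonneg hB9.le (mul_nonneg (pow_nonneg hc0 9) (pow_nonneg (by linarith only [hc1]) 3))
  have t10 : ((-583/64) + (209/64)*r + (-71/16)*b + (-23/16)*(r*b)) * (c^10 * (1-c)^2) ≤ 0 := mul_nonpos_of_nonpos_of_nonneg hB10.le (mul_nonneg (pow_nonneg hc0 10) (pow_nonneg (by linarith only [hc1]) 2))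
  have t11 : ((-9/4) + (1)*r + (-1)*b + (-1/2)*(r*b)) * (c^11 * (1-c)^1) ≤ 0 := mul_nonpos_of_nonpos_of_nonneg hB11.le (mul_nonneg (pow_nonneg hc0 11) (pow_nonneg (by linarith only [hc1]) 1))
  have t12 : ((-7/16) + (0)*r + (0)*b + (0)*(r*b)) * (c^12) ≤ 0 := mul_nonpos_of_nonpos_of_nonneg hB12.le (pow_nonneg hc0 12)
  have hneg : quarticF c s (-(1 - c) ^ 2) < 0 := by
    rw [hkey]
    refine mul_neg_of_pos_of_neg (pow_pos (by linarith only [hc1]) 4) ?_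
    linarith only [t0, t1, t2, t3, t4, t5, t6, t7, t8, t9, t10, t11, t12]
  refine ⟨e0, p0, hneg, ?_⟩
  have hx0 : -(1 - c) ^ 2 < 0 := by
    have h2 : (0:ℝ) < (1 - c) ^ 2 := pow_pos (by linarith only [hc1]) 2
    linarith only [h2]
  have hcont : ContinuousOn (quarticF c s) (Set.Icc (-(1 - c) ^ 2) 0) := by
    apply Continuous.continuousOn
    unfold quarticF
    fun_prop
  obtain ⟨x, hx, hfx⟩ := intermediate_value_Ioo hx0.le hcont ⟨hneg, p0⟩
  exact ⟨x, hx, hfx⟩
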